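/- Let W ⊂ ℝ² be a neighborhood of 0, h₁ ∈ C¹(cl W) with h₁ > 0 on cl W, α > 1, and h₀(x₁,x₂) = |x₁|^α h₁(x₁,x₂) on W. Then there exist δ > 0, β₀ > 0, c₂ > 0 such that for all 0 < β ≤ β₀ and all (x₁,x₂) in the rectangle (−2β^{1/α}, −β^{1/α}) × (−δ, δ), one has ∂h₀/∂x₁(x₁,x₂) ≤ −c₂ β^{1 − 1/α}. -/

import Mathlib

open Real Set

noncomputable section

lemma aux_div (a b : ℝ) (ha : 0 ≤ a) (hb : 0 ≤ b) :
    a / (2 * (b + 1)) * b ≤ a / 2 := by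
  rw [div_mul_eq_mul_div, div_le_div_iff₀ (by positivity) two_pos]
  nlinarith

theorem stmt5
    (W : Set (ℝ × ℝ)) (hWo : IsOpen W) (hW0 : (0, 0) ∈ W)
    (h₁ h₀ : ℝ × ℝ → ℝ) (hh₁ : ContDiff ℝ 1 h₁)
    (hh₁pos : ∀ x ∈ closure W, 0 < h₁ x)
    (α : ℝ) (hα : 1 < α)
    (hh₀ : ∀ x ∈ W, h₀ x = |x.1| ^ α * h₁ x) :
    ∃ δ > (0 : ℝ), ∃ β₀ > (0 : ℝ), ∃ c₂ > (0 : ℝ),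
      ∀ β : ℝ, 0 < β → β ≤ β₀ →
        ∀ x₁ x₂ : ℝ, x₁ ∈ Ioo (-2 * β ^ (1 / α)) (-(β ^ (1 / α))) →
          x₂ ∈ Ioo (-δ) δ →
          (x₁, x₂) ∈ W ∧
          deriv (fun t => h₀ (t, x₂)) x₁ ≤ -c₂ * β ^ (1 - 1 / α) := by
  have hα0 : (0:ℝ) < α := by linarith
  obtain ⟨ε₀, hε₀pos, hball⟩ := Metric.isOpen_iff.mp hWo (0,0) hW0
  set r : ℝ := ε₀ / 2 with hr
  have hrpos : 0 < r := by positivity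
  have hKW : Metric.closedBall ((0,0) : ℝ × ℝ) r ⊆ W := by
    refine subset_trans ?_ hball
    exact Metric.closedBall_subset_ball (by linarith)
  have hKc : IsCompact (Metric.closedBall ((0,0) : ℝ × ℝ) r) :=
    isCompact_closedBall _ _
  have hKne : (Metric.closedBall ((0,0) : ℝ × ℝ) r).Nonempty :=
    ⟨(0,0), Metric.mem_closedBall_self hrpos.le⟩
  -- minimum of h₁ on the ball
  obtain ⟨z, hzK, hzmin⟩ := hKc.exists_isMinOn hKne
    (hh₁.continuous.continuousOn)
  obtain ⟨m, hm⟩ : ∃ m : ℝ, m = h₁ z := ⟨_, rfl⟩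
  have hmpos : 0 < m := hm ▸ hh₁pos z (subset_closure (hKW hzK))
  -- maximum of ‖fderiv h₁‖ on the ball
  obtain ⟨w, hwK, hwmax⟩ := hKc.exists_isMaxOn hKne
    ((hh₁.continuous_fderiv one_ne_zero).norm.continuousOn)
  obtain ⟨M, hMdef⟩ : ∃ M : ℝ, M = ‖fderiv ℝ h₁ w‖ := ⟨_, rfl⟩
  have hM0 : 0 ≤ M := hMdef ▸ norm_nonneg _
  obtain ⟨ε, hε⟩ : ∃ ε : ℝ, ε = min r (α * m / (2 * (M + 1))) := ⟨_, rfl⟩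
  have hεpos : 0 < ε := hε ▸ lt_min hrpos
    (div_pos (mul_pos hα0 hmpos) (by positivity))
  refine ⟨r, hrpos, (ε/2) ^ α, Real.rpow_pos_of_pos (by positivity) α,
    α * m / 2, div_pos (mul_pos hα0 hmpos) two_pos, ?_⟩
  intro β hβ hββ₀ x₁ x₂ hx₁ hx₂
  have hβr : β ^ (1/α) ≤ ε / 2 := by
    calc β ^ (1/α) ≤ ((ε/2) ^ α) ^ (1/α) :=
          Real.rpow_le_rpow hβ.le hββ₀ (by positivity)
      _ = ε / 2 := by
          rw [← Real.rpow_mul (by positivity), mul_one_div, div_self (ne_of_gt hα0)]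
          simp
  have hβpow_pos : 0 < β ^ (1/α) := Real.rpow_pos_of_pos hβ _
  set s : ℝ := -x₁ with hs
  have hspos : 0 < s := by
    have := hx₁.2; simp [hs]; linarith [hβpow_pos, this]
  have hslb : β ^ (1/α) ≤ s := by
    have := hx₁.2; simp only [hs]; linarith
  have hsub : s ≤ ε := by
    have := hx₁.1; simp only [hs]; nlinarith [hβr]
  have hsr : s ≤ r := le_trans hsub (hε ▸ min_le_left _ _)
  -- membership
  have hmemK : ∀ t : ℝ, |t| ≤ r → (t, x₂) ∈ Metric.closedBall ((0,0) : ℝ × ℝ) r := by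
    intro t ht
    rw [Metric.mem_closedBall, Prod.dist_eq]
    simp only [dist_zero_right, Real.norm_eq_abs]
    exact max_le ht (le_of_lt (abs_lt.mpr ⟨hx₂.1, hx₂.2⟩))
  have hx₁abs : |x₁| = s := by rw [abs_of_neg (by linarith : x₁ < 0)]
  have hmemW : (x₁, x₂) ∈ W := hKW (hmemK x₁ (by rw [hx₁abs]; exact hsr))
  refine ⟨hmemW, ?_⟩
  -- derivative computation
  set P : ℝ × ℝ := (x₁, x₂) with hP
  set D : ℝ := fderiv ℝ h₁ P (1, 0) with hD
  have h1d : HasDerivAt (fun t : ℝ => h₁ (t, x₂)) D x₁ :=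
    ((hh₁.differentiable one_ne_zero P).hasFDerivAt).comp_hasDerivAt x₁
      ((hasDerivAt_id x₁).prodMk (hasDerivAt_const x₁ x₂))
  have hpow : HasDerivAt (fun t : ℝ => (-t) ^ α) (α * s ^ (α - 1) * (-1)) x₁ := by
    have h1 : HasDerivAt (fun y : ℝ => y ^ α) (α * s ^ (α - 1)) s := by
      have := Real.hasDerivAt_rpow_const (x := s) (p := α) (Or.inl (ne_of_gt hspos))
      simpa [mul_comm] using this
    have h2 : HasDerivAt (fun t : ℝ => -t) (-1) x₁ := hasDerivAt_neg x₁
    exact h1.comp x₁ h2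
  have hmul : HasDerivAt (fun t : ℝ => (-t) ^ α * h₁ (t, x₂))
      (α * s ^ (α - 1) * (-1) * h₁ P + s ^ α * D) x₁ := by
    have := hpow.mul h1d
    exact this
  have hev : (fun t : ℝ => h₀ (t, x₂)) =ᶠ[nhds x₁] (fun t : ℝ => (-t) ^ α * h₁ (t, x₂)) := by
    have hU : IsOpen ({t : ℝ | t < 0} ∩ {t : ℝ | (t, x₂) ∈ W}) := by
      apply IsOpen.inter isOpen_Iio
      exact hWo.preimage (by continuity)
    have hxU : x₁ ∈ ({t : ℝ | t < 0} ∩ {t : ℝ | (t, x₂) ∈ W}) :=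
      ⟨by simpa using (by linarith : x₁ < 0), hmemW⟩
    filter_upwards [hU.mem_nhds hxU] with t ht
    rw [hh₀ (t, x₂) ht.2]
    simp only
    rw [abs_of_neg ht.1]
  have hderiv : deriv (fun t => h₀ (t, x₂)) x₁
      = α * s ^ (α - 1) * (-1) * h₁ P + s ^ α * D := by
    rw [Filter.EventuallyEq.deriv_eq hev]
    exact hmul.deriv
  rw [hderiv]
  -- bounds
  have hPK : P ∈ Metric.closedBall ((0,0) : ℝ × ℝ) r :=
    hmemK x₁ (by rw [hx₁abs]; exact hsr)
  have hmle : m ≤ h₁ P := by have := hzmin hPK; simpa [hm] using this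
  have hDle : D ≤ M := by
    calc D ≤ |D| := le_abs_self _
      _ ≤ ‖fderiv ℝ h₁ P‖ * ‖((1:ℝ), (0:ℝ))‖ := by
          rw [← Real.norm_eq_abs]
          exact (fderiv ℝ h₁ P).le_opNorm _
      _ ≤ M * 1 := by
          have h1 : ‖((1:ℝ), (0:ℝ))‖ = 1 := by
            simp [Prod.norm_def]
          rw [h1]
          refine mul_le_mul_of_nonneg_right ?_ zero_le_one
          rw [hMdef]; exact hwmax hPK
      _ = M := mul_one M
  have hspow_pos : 0 < s ^ (α - 1) := Real.rpow_pos_of_pos hspos _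
  have hsα : s ^ α = s ^ (α - 1) * s := by
    rw [← Real.rpow_add_one (ne_of_gt hspos)]
    ring_nf
  have hsM : s * M ≤ α * m / 2 := by
    have h1 : s * M ≤ ε * M := mul_le_mul_of_nonneg_right hsub hM0
    have h2 : ε ≤ α * m / (2 * (M + 1)) := hε ▸ min_le_right _ _
    have h3 : ε * M ≤ α * m / (2 * (M + 1)) * M :=
      mul_le_mul_of_nonneg_right h2 hM0
    have h4 : α * m / (2 * (M + 1)) * M ≤ α * m / 2 :=
      aux_div (α * m) M (by positivity) hM0
    exact le_trans h1 (le_trans h3 h4)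
  have key : α * s ^ (α - 1) * (-1) * h₁ P + s ^ α * D
      ≤ -(α * m / 2) * s ^ (α - 1) := by
    have hb1 : α * s ^ (α - 1) * (-1) * h₁ P ≤ -(α * s ^ (α - 1) * m) := by
      have : α * s ^ (α - 1) * m ≤ α * s ^ (α - 1) * h₁ P :=
        mul_le_mul_of_nonneg_left hmle (mul_nonneg hα0.le hspow_pos.le)
      linarith
    have hb2 : s ^ α * D ≤ s ^ (α - 1) * (α * m / 2) := by
      calc s ^ α * D ≤ s ^ α * M :=
            mul_le_mul_of_nonneg_left hDle (Real.rpow_pos_of_pos hspos α).le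
        _ = s ^ (α - 1) * (s * M) := by rw [hsα]; ring
        _ ≤ s ^ (α - 1) * (α * m / 2) :=
            mul_le_mul_of_nonneg_left hsM hspow_pos.le
    have heq : -(α * s ^ (α - 1) * m) + s ^ (α - 1) * (α * m / 2)
        = -(α * m / 2) * s ^ (α - 1) := by ring
    linarith
  have hpowβ : β ^ (1 - 1/α) ≤ s ^ (α - 1) := by
    have h1 : (β ^ (1/α)) ^ (α - 1) ≤ s ^ (α - 1) :=
      Real.rpow_le_rpow hβpow_pos.le hslb (by linarith)
    have h2 : (β ^ (1/α)) ^ (α - 1) = β ^ (1 - 1/α) := by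
      rw [← Real.rpow_mul hβ.le]
      congr 1
      field_simp
    linarith
  calc α * s ^ (α - 1) * (-1) * h₁ P + s ^ α * D
      ≤ -(α * m / 2) * s ^ (α - 1) := key
    _ ≤ -(α * m / 2) * β ^ (1 - 1/α) := by
        rw [neg_mul, neg_mul, neg_le_neg_iff]
        exact mul_le_mul_of_nonneg_left hpowβ
          (le_of_lt (div_pos (mul_pos hα0 hmpos) two_pos))
    _ = -(α * m / 2) * β ^ (1 - 1/α) := rfl
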